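/- For every integer n ≥ 7 there exists a connected finite simple graph of order n and size exactly 2n + 1 that has no foresty minimum vertex cut; hence the size bound 2n in the preceding result is best possible. -/

import Mathlib

open SimpleGraph
open Finset

/-- `S` is a vertex cut of `G`: a proper subset of the vertex set whose removal
disconnects the graph. -/
def IsVertexCut {V : Type*} [Fintype V] (G : SimpleGraph V) (S : Finset V) : Prop :=
  (S : Set V) ≠ Set.univ ∧ ¬ (G.induce ((S : Set V)ᶜ)).Connected

/-- The connectivity `κ(G)`: the minimum cardinality of a vertex cut of `G`. -/
noncomputable def graphConnectivity {V : Type*} [Fintype V] (G : SimpleGraph V) : ℕ :=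
  sInf {k | ∃ S : Finset V, IsVertexCut G S ∧ S.card = k}

/-- circulant adjacency on `ZMod m` via natural values -/
def circAdj (m : ℕ) (a b : ℕ) : Prop :=
  (a : ZMod m) - b = 1 ∨ (a : ZMod m) - b = 2 ∨ (b : ZMod m) - a = 1 ∨ (b : ZMod m) - a = 2

instance (m a b : ℕ) : Decidable (circAdj m a b) := by unfold circAdj; infer_instance

/-- the graph: circulant C_{n-1}(1,2) on vertices of value < n-1 plus an apex
vertex (value n-1) joined to vertices 0,1,2. -/
def MyG (n : ℕ) : SimpleGraph (Fin n) where
  Adj i j := i ≠ j ∧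
    ((i.val < n-1 ∧ j.val < n-1 ∧ circAdj (n-1) i.val j.val)
      ∨ (i.val = n-1 ∧ j.val < 3) ∨ (j.val = n-1 ∧ i.val < 3))
  symm := ⟨by
    rintro i j ⟨hne, h⟩
    refine ⟨hne.symm, ?_⟩
    unfold circAdj at *
    tauto⟩
  loopless := ⟨fun i h => h.1 rfl⟩

instance (n : ℕ) : DecidableRel (MyG n).Adj := fun i j =>
  inferInstanceAs (Decidable (_ ∧ _))

section

variable (n : ℕ) (h7 : 7 ≤ n)

include h7

/-- embedding of circulant vertices -/
def cv (z : ZMod (n-1)) : Fin n :=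
  ⟨z.val, by
    haveI : NeZero (n-1) := ⟨by omega⟩
    exact lt_of_lt_of_le (ZMod.val_lt z) (by omega)⟩

/-- the apex vertex -/
def uv : Fin n := ⟨n-1, by omega⟩

variable {n}

lemma cv_val (z : ZMod (n-1)) : (cv n h7 z).val = z.val := rfl

lemma castval (z : ZMod (n-1)) : ((z.val : ℕ) : ZMod (n-1)) = z := by
  haveI : NeZero (n-1) := ⟨by omega⟩
  simp [ZMod.natCast_val, ZMod.cast_id]

lemma nz (k : ℕ) (h0 : 0 < k) (hk : k < n-1) : ((k : ℕ) : ZMod (n-1)) ≠ 0 := by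
  intro h
  have := ZMod.val_cast_of_lt hk
  rw [h, ZMod.val_zero] at this
  omega

lemma cv_inj {z w : ZMod (n-1)} (h : cv n h7 z = cv n h7 w) : z = w := by
  have : z.val = w.val := congrArg Fin.val h
  rw [← castval h7 z, ← castval h7 w, this]

lemma cv_ne (w u : ZMod (n-1)) (k : ℕ) (h0 : 0 < k) (hk : k < n-1)
    (hd : w - u = (k : ℕ)) : cv n h7 w ≠ cv n h7 u := by
  intro h
  have := cv_inj h7 h
  apply nz h7 k h0 hk
  rw [← hd, this, sub_self]

lemma cv_ne_uv (z : ZMod (n-1)) : cv n h7 z ≠ uv n h7 := by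
  intro h
  have h1 : (cv n h7 z).val = z.val := rfl
  have h2 : z.val < n-1 := by
    haveI : NeZero (n-1) := ⟨by omega⟩
    exact ZMod.val_lt z
  have : (uv n h7).val = n-1 := rfl
  rw [h] at h1
  omega

lemma adj_cv (z w : ZMod (n-1))
    (h : w - z = 1 ∨ w - z = 2 ∨ z - w = 1 ∨ z - w = 2) :
    (MyG n).Adj (cv n h7 z) (cv n h7 w) := by
  haveI : NeZero (n-1) := ⟨by omega⟩
  have h1 : ((1:ℕ) : ZMod (n-1)) = 1 := by push_cast; ring
  have h2 : ((2:ℕ) : ZMod (n-1)) = 2 := by push_cast; ring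
  have hzw : z ≠ w := by
    rintro rfl
    rcases h with h | h | h | h <;> rw [sub_self] at h <;>
      [exact nz h7 1 (by omega) (by omega) (by rw [h1, ← h]);
       exact nz h7 2 (by omega) (by omega) (by rw [h2, ← h]);
       exact nz h7 1 (by omega) (by omega) (by rw [h1, ← h]);
       exact nz h7 2 (by omega) (by omega) (by rw [h2, ← h])]
  refine ⟨fun hc => hzw (cv_inj h7 hc), Or.inl ⟨?_, ?_, ?_⟩⟩
  · exact lt_of_lt_of_le (ZMod.val_lt z) (le_refl _)
  · exact lt_of_lt_of_le (ZMod.val_lt w) (le_refl _)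
  · unfold circAdj
    rw [cv_val, cv_val, castval h7, castval h7]
    tauto

lemma adj_uv (z : ZMod (n-1)) (hz : z.val < 3) :
    (MyG n).Adj (uv n h7) (cv n h7 z) := by
  refine ⟨fun h => cv_ne_uv h7 z h.symm, Or.inr (Or.inl ⟨rfl, hz⟩)⟩

include h7 in
lemma reachB (A : Set (Fin n)) (d : ℕ) (a b : ZMod (n-1))
    (hab : ((d:ℕ) : ZMod (n-1)) = b - a)
    (ha : cv n h7 a ∈ A) (hb : cv n h7 b ∈ A)
    (hmid : ∀ i j : ℕ, 0 < i → i < d → 0 < j → j < d →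
      cv n h7 (a + i) ∉ A → cv n h7 (a + j) ∉ A → i = j) :
    ((MyG n).induce A).Reachable ⟨cv n h7 a, ha⟩ ⟨cv n h7 b, hb⟩ := by
  induction d using Nat.strong_induction_on generalizing a with
  | _ d ih =>
  match hd : d with
  | 0 =>
    have : b = a := by
      have : b - a = 0 := by rw [← hab]; push_cast; ring
      have := sub_eq_zero.mp this
      exact this
    subst this
    rfl
  | 1 =>
    have hadj : (MyG n).Adj (cv n h7 a) (cv n h7 b) :=
      adj_cv h7 a b (Or.inl (by rw [← hab]; push_cast; ring))
    exact (Adj.reachable (by exact hadj : ((MyG n).induce A).Adj ⟨_, ha⟩ ⟨_, hb⟩))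
  | 2 =>
    have hadj : (MyG n).Adj (cv n h7 a) (cv n h7 b) :=
      adj_cv h7 a b (Or.inr (Or.inl (by rw [← hab]; push_cast; ring)))
    exact (Adj.reachable (by exact hadj : ((MyG n).induce A).Adj ⟨_, ha⟩ ⟨_, hb⟩))
  | (k+3) =>
    by_cases h1 : cv n h7 (a + ((1:ℕ) : ZMod (n-1))) ∈ A
    · have hadj : (MyG n).Adj (cv n h7 a) (cv n h7 (a + ((1:ℕ) : ZMod (n-1)))) :=
        adj_cv h7 _ _ (Or.inl (by push_cast; ring))
      have hrec := ih (k+2) (by omega) (a + ((1:ℕ) : ZMod (n-1)))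
        (by rw [← sub_sub, ← hab]; push_cast; ring) h1
        (fun i j hi hij hj hjj hni hnj => by
          have e : ∀ i : ℕ, a + ((1:ℕ):ZMod (n-1)) + (i:ZMod (n-1))
              = a + (((i+1 : ℕ)) : ZMod (n-1)) := by intro i; push_cast; ring
          rw [e i] at hni; rw [e j] at hnj
          have := hmid (i+1) (j+1) (by omega) (by omega) (by omega) (by omega) hni hnj
          omega)
      exact Reachable.trans
        (Adj.reachable (by exact hadj : ((MyG n).induce A).Adj ⟨_, ha⟩ ⟨_, h1⟩)) hrec
    · have h2 : cv n h7 (a + ((2:ℕ) : ZMod (n-1))) ∈ A := by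
        by_contra h2
        have := hmid 1 2 (by omega) (by omega) (by omega) (by omega) h1 h2
        omega
      have hadj : (MyG n).Adj (cv n h7 a) (cv n h7 (a + ((2:ℕ) : ZMod (n-1)))) :=
        adj_cv h7 _ _ (Or.inr (Or.inl (by push_cast; ring)))
      have hrec := ih (k+1) (by omega) (a + ((2:ℕ) : ZMod (n-1)))
        (by rw [← sub_sub, ← hab]; push_cast; ring) h2
        (fun i j hi hij hj hjj hni hnj => by
          have e : ∀ i : ℕ, a + ((2:ℕ):ZMod (n-1)) + (i:ZMod (n-1))
              = a + (((i+2 : ℕ)) : ZMod (n-1)) := by intro i; push_cast; ring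
          rw [e i] at hni; rw [e j] at hnj
          have := hmid (i+2) (j+2) (by omega) (by omega) (by omega) (by omega) hni hnj
          omega)
      exact Reachable.trans
        (Adj.reachable (by exact hadj : ((MyG n).induce A).Adj ⟨_, ha⟩ ⟨_, h2⟩)) hrec

end
section
variable {n : ℕ} (h7 : 7 ≤ n)
include h7

lemma reachMain (A : Set (Fin n))
    (hA : ∀ T : Finset (ZMod (n-1)), (∀ z ∈ T, cv n h7 z ∉ A) → T.card ≤ 3)
    (a b : ZMod (n-1)) (ha : cv n h7 a ∈ A) (hb : cv n h7 b ∈ A) :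
    ((MyG n).induce A).Reachable ⟨cv n h7 a, ha⟩ ⟨cv n h7 b, hb⟩ := by
  haveI : NeZero (n-1) := ⟨by omega⟩
  set d : ℕ := (b - a).val with hdd
  have hab : ((d:ℕ) : ZMod (n-1)) = b - a := castval h7 _
  by_cases hmid : ∀ i j : ℕ, 0 < i → i < d → 0 < j → j < d →
      cv n h7 (a + i) ∉ A → cv n h7 (a + j) ∉ A → i = j
  · exact reachB h7 A d a b hab ha hb hmid
  · push_neg at hmid
    obtain ⟨i, j, hi0, hid, hj0, hjd, hni, hnj, hij⟩ := hmid
    -- now go backwards from b to a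
    have hne : b - a ≠ 0 := by
      intro h
      have hd0 : d = 0 := by rw [hdd, h, ZMod.val_zero]
      omega
    set d' : ℕ := (a - b).val with hdd'
    have hab' : ((d':ℕ) : ZMod (n-1)) = a - b := castval h7 _
    have hd' : d' = (n-1) - d := by
      rw [hdd', hdd, show a - b = -(b - a) by ring, ZMod.neg_val, if_neg hne]
    have hdlt : d < n-1 := ZMod.val_lt _
    have hmid' : ∀ k l : ℕ, 0 < k → k < d' → 0 < l → l < d' →
        cv n h7 (b + k) ∉ A → cv n h7 (b + l) ∉ A → k = l := by
      intro k l hk0 hkd hl0 hld hnk hnl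
      by_contra hkl
      -- four distinct removed vertices
      have hbda : b = a + (d:ℕ) := by rw [hab]; ring
      have ecast : ∀ p q : ℕ, p < n-1 → q < n-1 → p ≠ q →
          a + ((p:ℕ) : ZMod (n-1)) ≠ a + ((q:ℕ) : ZMod (n-1)) := by
        intro p q hp hq hpq h
        have := add_left_cancel h
        apply hpq
        rw [← ZMod.val_cast_of_lt hp, ← ZMod.val_cast_of_lt hq, this]
      have hbk : b + ((k:ℕ) : ZMod (n-1)) = a + (((d + k : ℕ)) : ZMod (n-1)) := by
        rw [hbda]; push_cast; ring
      have hbl : b + ((l:ℕ) : ZMod (n-1)) = a + (((d + l : ℕ)) : ZMod (n-1)) := by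
        rw [hbda]; push_cast; ring
      rw [hbk] at hnk; rw [hbl] at hnl
      set T : Finset (ZMod (n-1)) :=
        {a + ((i:ℕ) : ZMod (n-1)), a + ((j:ℕ) : ZMod (n-1)),
         a + (((d+k:ℕ)) : ZMod (n-1)), a + (((d+l:ℕ)) : ZMod (n-1))} with hT
      have hcard : T.card = 4 := by
        rw [hT]
        rw [Finset.card_insert_of_notMem, Finset.card_insert_of_notMem,
            Finset.card_insert_of_notMem, Finset.card_singleton]
        · simp only [Finset.mem_singleton]
          exact ecast (d+k) (d+l) (by omega) (by omega) (by omega)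
        · simp only [Finset.mem_insert, Finset.mem_singleton]
          push_neg
          exact ⟨ecast j (d+k) (by omega) (by omega) (by omega),
                 ecast j (d+l) (by omega) (by omega) (by omega)⟩
        · simp only [Finset.mem_insert, Finset.mem_singleton]
          push_neg
          exact ⟨ecast i j (by omega) (by omega) (by omega),
                 ecast i (d+k) (by omega) (by omega) (by omega),
                 ecast i (d+l) (by omega) (by omega) (by omega)⟩
      have hTout : ∀ z ∈ T, cv n h7 z ∉ A := by
        intro z hz
        rw [hT] at hz
        simp only [Finset.mem_insert, Finset.mem_singleton] at hz
        rcases hz with rfl | rfl | rfl | rfl <;> assumption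
      have := hA T hTout
      omega
    have hba : ((d':ℕ) : ZMod (n-1)) = a - b := hab'
    exact (reachB h7 A d' b a hba hb ha hmid').symm
/-- the triangle -/
def triSet : Finset (Fin n) :=
  {cv n h7 ((0:ℕ) : ZMod (n-1)), cv n h7 ((1:ℕ) : ZMod (n-1)), cv n h7 ((2:ℕ) : ZMod (n-1))}

lemma ecast0 (p q : ℕ) (hp : p < n-1) (hq : q < n-1) (hpq : p ≠ q) :
    ((p:ℕ) : ZMod (n-1)) ≠ ((q:ℕ) : ZMod (n-1)) := by
  intro h
  apply hpq
  rw [← ZMod.val_cast_of_lt hp, ← ZMod.val_cast_of_lt hq, h]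

lemma noCut (S : Finset (Fin n)) (hcard : S.card ≤ 3) (hnot : ¬ (triSet h7 ⊆ S)) :
    ((MyG n).induce ((S : Set (Fin n))ᶜ)).Connected := by
  haveI : NeZero (n-1) := ⟨by omega⟩
  set A : Set (Fin n) := (S : Set (Fin n))ᶜ with hAdef
  have hmemA : ∀ x : Fin n, x ∈ A ↔ x ∉ S := by
    intro x; rw [hAdef]; simp
  have hA : ∀ T : Finset (ZMod (n-1)), (∀ z ∈ T, cv n h7 z ∉ A) → T.card ≤ 3 := by
    intro T hT
    have hsub : T.image (cv n h7) ⊆ S := by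
      intro x hx
      simp only [Finset.mem_image] at hx
      obtain ⟨z, hz, rfl⟩ := hx
      have := hT z hz
      rw [hmemA] at this
      exact not_not.mp this
    calc T.card = (T.image (cv n h7)).card :=
          (Finset.card_image_of_injective T (fun _ _ h => cv_inj h7 h)).symm
      _ ≤ S.card := Finset.card_le_card hsub
      _ ≤ 3 := hcard
  -- find a circulant survivor
  have hz₀ : ∃ z₀ : ZMod (n-1), cv n h7 z₀ ∈ A := by
    by_contra hc
    push_neg at hc
    set T₀ : Finset (ZMod (n-1)) :=
      {((0:ℕ) : ZMod (n-1)), ((1:ℕ) : ZMod (n-1)), ((2:ℕ) : ZMod (n-1)),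
        ((3:ℕ) : ZMod (n-1))} with hT₀
    have h4 : T₀.card = 4 := by
      rw [hT₀, Finset.card_insert_of_notMem, Finset.card_insert_of_notMem,
          Finset.card_insert_of_notMem, Finset.card_singleton]
      · simp only [Finset.mem_singleton]
        exact ecast0 h7 2 3 (by omega) (by omega) (by omega)
      · simp only [Finset.mem_insert, Finset.mem_singleton]
        push_neg
        exact ⟨ecast0 h7 1 2 (by omega) (by omega) (by omega),
               ecast0 h7 1 3 (by omega) (by omega) (by omega)⟩
      · simp only [Finset.mem_insert, Finset.mem_singleton]
        push_neg
        exact ⟨ecast0 h7 0 1 (by omega) (by omega) (by omega),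
               ecast0 h7 0 2 (by omega) (by omega) (by omega),
               ecast0 h7 0 3 (by omega) (by omega) (by omega)⟩
    have := hA T₀ (fun z _ => hc z)
    omega
  obtain ⟨z₀, hz₀⟩ := hz₀
  have hreach : ∀ x : A, ((MyG n).induce A).Reachable x ⟨cv n h7 z₀, hz₀⟩ := by
    rintro ⟨v, hv⟩
    by_cases hvm : v.val < n-1
    · have hveq : v = cv n h7 ((v.val : ℕ) : ZMod (n-1)) :=
        Fin.ext (by rw [cv_val]; exact (ZMod.val_cast_of_lt hvm).symm)
      have hv' : cv n h7 ((v.val : ℕ) : ZMod (n-1)) ∈ A := hveq ▸ hv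
      rw [show (⟨v, hv⟩ : A) = ⟨cv n h7 ((v.val : ℕ) : ZMod (n-1)), hv'⟩ from
        Subtype.ext hveq]
      exact reachMain h7 A hA _ z₀ hv' hz₀
    · have hveq : v = uv n h7 := Fin.ext (by
        have := v.isLt
        show v.val = n-1
        omega)
      have hv' : uv n h7 ∈ A := hveq ▸ hv
      rw [show (⟨v, hv⟩ : A) = ⟨uv n h7, hv'⟩ from Subtype.ext hveq]
      obtain ⟨x, hxS₀, hxS⟩ := Finset.not_subset.mp hnot
      have hxA : x ∈ A := (hmemA x).mpr hxS
      have hx3 : x = cv n h7 ((0:ℕ) : ZMod (n-1)) ∨ x = cv n h7 ((1:ℕ) : ZMod (n-1)) ∨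
          x = cv n h7 ((2:ℕ) : ZMod (n-1)) := by
        simpa [triSet] using hxS₀
      have key : ∀ w : ZMod (n-1), w.val < 3 → x = cv n h7 w →
          ((MyG n).induce A).Reachable ⟨uv n h7, hv'⟩ ⟨cv n h7 z₀, hz₀⟩ := by
        intro w hw3 hxw
        subst hxw
        have hadj : (MyG n).Adj (uv n h7) (cv n h7 w) := adj_uv h7 w hw3
        exact Reachable.trans
          (Adj.reachable (by exact hadj :
            ((MyG n).induce A).Adj ⟨uv n h7, hv'⟩ ⟨cv n h7 w, hxA⟩))
          (reachMain h7 A hA w z₀ hxA hz₀)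
      rcases hx3 with h | h | h
      · exact key _ (by rw [ZMod.val_cast_of_lt (by omega : 0 < n-1)]; omega) h
      · exact key _ (by rw [ZMod.val_cast_of_lt (by omega : 1 < n-1)]; omega) h
      · exact key _ (by rw [ZMod.val_cast_of_lt (by omega : 2 < n-1)]; omega) h
  rw [connected_iff]
  exact ⟨fun x y => (hreach x).trans (hreach y).symm, ⟨⟨cv n h7 z₀, hz₀⟩⟩⟩
lemma cv_val_small (k : ℕ) (hk : k < n-1) :
    (cv n h7 ((k:ℕ) : ZMod (n-1))).val = k := by
  rw [cv_val]; exact ZMod.val_cast_of_lt hk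

lemma mem_tri_of_val_lt3 (x : Fin n) (hx : x.val < 3) : x ∈ triSet h7 := by
  simp only [triSet, Finset.mem_insert, Finset.mem_singleton]
  rcases (by omega : x.val = 0 ∨ x.val = 1 ∨ x.val = 2) with h | h | h
  · exact Or.inl (Fin.ext (by rw [cv_val_small h7 0 (by omega)]; exact h))
  · exact Or.inr (Or.inl (Fin.ext (by rw [cv_val_small h7 1 (by omega)]; exact h)))
  · exact Or.inr (Or.inr (Fin.ext (by rw [cv_val_small h7 2 (by omega)]; exact h)))

lemma val_of_mem_tri (x : Fin n) (hx : x ∈ triSet h7) : x.val < 3 := by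
  simp only [triSet, Finset.mem_insert, Finset.mem_singleton] at hx
  rcases hx with rfl | rfl | rfl
  · rw [cv_val_small h7 0 (by omega)]; omega
  · rw [cv_val_small h7 1 (by omega)]; omega
  · rw [cv_val_small h7 2 (by omega)]; omega

lemma uv_not_tri : uv n h7 ∉ triSet h7 := by
  intro h
  have := val_of_mem_tri h7 _ h
  have : (uv n h7).val = n-1 := rfl
  omega

lemma triCard : (triSet h7).card = 3 := by
  have hne : ∀ p q : ℕ, p < n-1 → q < n-1 → p ≠ q →
      cv n h7 ((p:ℕ) : ZMod (n-1)) ≠ cv n h7 ((q:ℕ) : ZMod (n-1)) :=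
    fun p q hp hq hpq h => ecast0 h7 p q hp hq hpq (cv_inj h7 h)
  rw [triSet, Finset.card_insert_of_notMem, Finset.card_insert_of_notMem,
      Finset.card_singleton]
  · simp only [Finset.mem_singleton]
    exact hne 1 2 (by omega) (by omega) (by omega)
  · simp only [Finset.mem_insert, Finset.mem_singleton]
    push_neg
    exact ⟨hne 0 1 (by omega) (by omega) (by omega),
           hne 0 2 (by omega) (by omega) (by omega)⟩

lemma cutTri : IsVertexCut (MyG n) (triSet h7) := by
  haveI : NeZero (n-1) := ⟨by omega⟩
  constructor
  · intro h
    have : uv n h7 ∈ (triSet h7 : Set (Fin n)) := h ▸ Set.mem_univ _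
    exact uv_not_tri h7 (by simpa using this)
  · intro hc
    set A : Set (Fin n) := (triSet h7 : Set (Fin n))ᶜ with hAdef
    have huvA : uv n h7 ∈ A := by
      simp only [hAdef, Set.mem_compl_iff, Finset.mem_coe]
      exact uv_not_tri h7
    have hc3A : cv n h7 ((3:ℕ) : ZMod (n-1)) ∈ A := by
      simp only [hAdef, Set.mem_compl_iff, Finset.mem_coe]
      intro h
      have := val_of_mem_tri h7 _ h
      rw [cv_val_small h7 3 (by omega)] at this
      omega
    obtain ⟨w⟩ := hc.preconnected ⟨uv n h7, huvA⟩ ⟨cv n h7 ((3:ℕ) : ZMod (n-1)), hc3A⟩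
    have key : ∀ (x y : A) (w : ((MyG n).induce A).Walk x y),
        (x : Fin n) = uv n h7 → (y : Fin n) = cv n h7 ((3:ℕ) : ZMod (n-1)) → False := by
      intro x y w
      induction w with
      | nil =>
        intro hx hy
        rw [hx] at hy
        exact cv_ne_uv h7 _ hy.symm
      | @cons x' z' y' h p ih =>
        intro hx _
        have hadj : (MyG n).Adj (x' : Fin n) (z' : Fin n) := h
        rw [hx] at hadj
        rcases hadj.2 with ⟨h1, _⟩ | ⟨_, h2⟩ | ⟨_, h3⟩
        · have : (uv n h7).val = n-1 := rfl
          omega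
        · have hz := z'.2
          simp only [hAdef, Set.mem_compl_iff, Finset.mem_coe] at hz
          exact hz (mem_tri_of_val_lt3 h7 _ h2)
        · have : (uv n h7).val = n-1 := rfl
          omega
    exact key _ _ w rfl rfl

lemma kappa : graphConnectivity (MyG n) = 3 := by
  apply IsLeast.csInf_eq
  constructor
  · exact ⟨triSet h7, cutTri h7, triCard h7⟩
  · rintro k ⟨S, hS, rfl⟩
    by_contra hk
    push_neg at hk
    have hnot : ¬ triSet h7 ⊆ S := by
      intro hsub
      have := Finset.card_le_card hsub
      rw [triCard h7] at this
      omega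
    exact hS.2 (noCut h7 S (by omega) hnot)

lemma cutEq (S : Finset (Fin n)) (hS : IsVertexCut (MyG n) S) (h3 : S.card = 3) :
    S = triSet h7 := by
  have hsub : triSet h7 ⊆ S := by
    by_contra h
    exact hS.2 (noCut h7 S (le_of_eq h3) h)
  exact (Finset.eq_of_subset_of_card_le hsub (by rw [h3, triCard h7])).symm
lemma triNotAcyclic : ¬ ((MyG n).induce ((triSet h7 : Set (Fin n)))).IsAcyclic := by
  haveI : NeZero (n-1) := ⟨by omega⟩
  intro hac
  set c0 : ZMod (n-1) := ((0:ℕ) : ZMod (n-1)) with hc0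
  set c1 : ZMod (n-1) := ((1:ℕ) : ZMod (n-1)) with hc1
  set c2 : ZMod (n-1) := ((2:ℕ) : ZMod (n-1)) with hc2
  have m0 : cv n h7 c0 ∈ (triSet h7 : Set (Fin n)) := by
    simp only [triSet, Finset.coe_insert, Set.mem_insert_iff, Finset.coe_singleton,
      Set.mem_singleton_iff]
    tauto
  have m1 : cv n h7 c1 ∈ (triSet h7 : Set (Fin n)) := by
    simp only [triSet, Finset.coe_insert, Set.mem_insert_iff, Finset.coe_singleton,
      Set.mem_singleton_iff]
    tauto
  have m2 : cv n h7 c2 ∈ (triSet h7 : Set (Fin n)) := by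
    simp only [triSet, Finset.coe_insert, Set.mem_insert_iff, Finset.coe_singleton,
      Set.mem_singleton_iff]
    tauto
  set a : (triSet h7 : Set (Fin n)) := ⟨cv n h7 c0, m0⟩ with hadef
  set b : (triSet h7 : Set (Fin n)) := ⟨cv n h7 c1, m1⟩ with hbdef
  set c : (triSet h7 : Set (Fin n)) := ⟨cv n h7 c2, m2⟩ with hcdef
  have hne : ∀ p q : ℕ, p < n-1 → q < n-1 → p ≠ q →
      cv n h7 ((p:ℕ) : ZMod (n-1)) ≠ cv n h7 ((q:ℕ) : ZMod (n-1)) :=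
    fun p q hp hq hpq h => ecast0 h7 p q hp hq hpq (cv_inj h7 h)
  have n01 : a ≠ b := fun h =>
    hne 0 1 (by omega) (by omega) (by omega) (congrArg Subtype.val h)
  have n12 : b ≠ c := fun h =>
    hne 1 2 (by omega) (by omega) (by omega) (congrArg Subtype.val h)
  have n02 : a ≠ c := fun h =>
    hne 0 2 (by omega) (by omega) (by omega) (congrArg Subtype.val h)
  have h01 : ((MyG n).induce ((triSet h7 : Set (Fin n)))).Adj a b := by
    exact adj_cv h7 c0 c1 (Or.inl (by rw [hc0, hc1]; push_cast; ring))
  have h12 : ((MyG n).induce ((triSet h7 : Set (Fin n)))).Adj b c := by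
    exact adj_cv h7 c1 c2 (Or.inl (by rw [hc1, hc2]; push_cast; ring))
  have h20 : ((MyG n).induce ((triSet h7 : Set (Fin n)))).Adj c a := by
    exact adj_cv h7 c2 c0 (Or.inr (Or.inr (Or.inr (by rw [hc0, hc2]; push_cast; ring))))
  have hcyc : (SimpleGraph.Walk.cons h01
      (SimpleGraph.Walk.cons h12 (SimpleGraph.Walk.cons h20 SimpleGraph.Walk.nil))).IsCycle := by
    rw [SimpleGraph.Walk.cons_isCycle_iff]
    constructor
    · rw [SimpleGraph.Walk.isPath_def]
      simp only [SimpleGraph.Walk.support_cons, SimpleGraph.Walk.support_nil,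
        List.nodup_cons, List.mem_cons, List.mem_singleton, List.not_mem_nil,
        List.nodup_nil, and_true, not_or, or_false]
      exact ⟨⟨n12, fun h => n01 h.symm⟩, fun h => n02 h.symm, not_false⟩
    · simp only [SimpleGraph.Walk.edges_cons, SimpleGraph.Walk.edges_nil,
        List.mem_cons, List.not_mem_nil, or_false]
      rintro (h | h) <;> rw [Sym2.eq_iff] at h
      · rcases h with ⟨h1, h2⟩ | ⟨h1, h2⟩
        · exact n01 h1
        · exact n02 h1
      · rcases h with ⟨h1, h2⟩ | ⟨h1, h2⟩
        · exact n02 h1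
        · exact n12 h2
  exact hac _ hcyc
lemma adj_cv_iff (z : ZMod (n-1)) (x : Fin n) :
    (MyG n).Adj (cv n h7 z) x ↔
      ((x = cv n h7 (z+1) ∨ x = cv n h7 (z+2) ∨ x = cv n h7 (z-1) ∨ x = cv n h7 (z-2))
        ∨ (x = uv n h7 ∧ z.val < 3)) := by
  haveI : NeZero (n-1) := ⟨by omega⟩
  constructor
  · intro h
    rcases h.2 with ⟨_, hx, hcirc⟩ | ⟨h1, _⟩ | ⟨h1, h2⟩
    · left
      have hxeq : x = cv n h7 ((x.val : ℕ) : ZMod (n-1)) :=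
        Fin.ext (by rw [cv_val]; exact (ZMod.val_cast_of_lt hx).symm)
      set w : ZMod (n-1) := ((x.val : ℕ) : ZMod (n-1)) with hw
      unfold circAdj at hcirc
      rw [cv_val] at hcirc
      rw [castval h7 z] at hcirc
      rw [← hw] at hcirc
      rcases hcirc with h | h | h | h
      · exact Or.inr (Or.inr (Or.inl (by rw [hxeq]; congr 1; rw [← h]; ring)))
      · exact Or.inr (Or.inr (Or.inr (by rw [hxeq]; congr 1; rw [← h]; ring)))
      · exact Or.inl (by rw [hxeq]; congr 1; rw [← h]; ring)
      · exact Or.inr (Or.inl (by rw [hxeq]; congr 1; rw [← h]; ring))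
    · exfalso
      rw [cv_val] at h1
      have := ZMod.val_lt z
      omega
    · right
      rw [cv_val] at h2
      exact ⟨Fin.ext h1, h2⟩
  · intro h
    rcases h with (h | h | h | h) | ⟨rfl, h3⟩
    · exact h ▸ adj_cv h7 z _ (Or.inl (by ring))
    · exact h ▸ adj_cv h7 z _ (Or.inr (Or.inl (by ring)))
    · exact h ▸ adj_cv h7 z _ (Or.inr (Or.inr (Or.inl (by ring))))
    · exact h ▸ adj_cv h7 z _ (Or.inr (Or.inr (Or.inr (by ring))))
    · exact ⟨cv_ne_uv h7 z, Or.inr (Or.inr ⟨rfl, by rw [cv_val]; exact h3⟩)⟩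

lemma deg_uv : (MyG n).degree (uv n h7) = 3 := by
  have hN : (MyG n).neighborFinset (uv n h7) = triSet h7 := by
    ext x
    rw [SimpleGraph.mem_neighborFinset]
    constructor
    · intro h
      rcases h.2 with ⟨h1, _⟩ | ⟨_, h2⟩ | ⟨h1, h2⟩
      · exfalso
        have : (uv n h7).val = n-1 := rfl
        omega
      · exact mem_tri_of_val_lt3 h7 x h2
      · exfalso
        have : (uv n h7).val = n-1 := rfl
        omega
    · intro h
      have h3 := val_of_mem_tri h7 x h
      refine ⟨fun hc => ?_, Or.inr (Or.inl ⟨rfl, h3⟩)⟩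
      have : (uv n h7).val = n-1 := rfl
      rw [← hc] at h3
      omega
  rw [SimpleGraph.degree, hN, triCard h7]

lemma cvne (z : ZMod (n-1)) (u' w : ZMod (n-1)) (k : ℕ) (h0 : 0 < k) (hk : k < n-1)
    (hd : u' - w = (k : ℕ)) : cv n h7 u' ≠ cv n h7 w :=
  cv_ne h7 u' w k h0 hk hd

lemma fourCard (z : ZMod (n-1)) :
    ({cv n h7 (z+1), cv n h7 (z+2), cv n h7 (z-1), cv n h7 (z-2)} :
      Finset (Fin n)).card = 4 := by
  have d21 : cv n h7 (z+2) ≠ cv n h7 (z+1) :=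
    cvne h7 z _ _ 1 (by omega) (by omega) (by push_cast; ring)
  have d1m1 : cv n h7 (z+1) ≠ cv n h7 (z-1) :=
    cvne h7 z _ _ 2 (by omega) (by omega) (by push_cast; ring)
  have d1m2 : cv n h7 (z+1) ≠ cv n h7 (z-2) :=
    cvne h7 z _ _ 3 (by omega) (by omega) (by push_cast; ring)
  have d2m1 : cv n h7 (z+2) ≠ cv n h7 (z-1) :=
    cvne h7 z _ _ 3 (by omega) (by omega) (by push_cast; ring)
  have d2m2 : cv n h7 (z+2) ≠ cv n h7 (z-2) :=
    cvne h7 z _ _ 4 (by omega) (by omega) (by push_cast; ring)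
  have dm1m2 : cv n h7 (z-1) ≠ cv n h7 (z-2) :=
    cvne h7 z _ _ 1 (by omega) (by omega) (by push_cast; ring)
  rw [Finset.card_insert_of_notMem, Finset.card_insert_of_notMem,
      Finset.card_insert_of_notMem, Finset.card_singleton]
  · simp only [Finset.mem_singleton]; exact dm1m2
  · simp only [Finset.mem_insert, Finset.mem_singleton]; push_neg
    exact ⟨d2m1, d2m2⟩
  · simp only [Finset.mem_insert, Finset.mem_singleton]; push_neg
    exact ⟨d21.symm, d1m1, d1m2⟩

lemma deg_cv_big (z : ZMod (n-1)) (hz : ¬ z.val < 3) :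
    (MyG n).degree (cv n h7 z) = 4 := by
  have hN : (MyG n).neighborFinset (cv n h7 z) =
      {cv n h7 (z+1), cv n h7 (z+2), cv n h7 (z-1), cv n h7 (z-2)} := by
    ext x
    rw [SimpleGraph.mem_neighborFinset, adj_cv_iff h7]
    simp only [Finset.mem_insert, Finset.mem_singleton]
    tauto
  rw [SimpleGraph.degree, hN, fourCard h7]

lemma deg_cv_small (z : ZMod (n-1)) (hz : z.val < 3) :
    (MyG n).degree (cv n h7 z) = 5 := by
  have hN : (MyG n).neighborFinset (cv n h7 z) =
      insert (uv n h7) {cv n h7 (z+1), cv n h7 (z+2), cv n h7 (z-1), cv n h7 (z-2)} := by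
    ext x
    rw [SimpleGraph.mem_neighborFinset, adj_cv_iff h7]
    simp only [Finset.mem_insert, Finset.mem_singleton]
    constructor
    · rintro ((h | h | h | h) | ⟨h, _⟩) <;> tauto
    · rintro (h | h | h | h | h)
      · exact Or.inr ⟨h, hz⟩
      all_goals tauto
  rw [SimpleGraph.degree, hN, Finset.card_insert_of_notMem, fourCard h7]
  simp only [Finset.mem_insert, Finset.mem_singleton]
  push_neg
  exact ⟨(cv_ne_uv h7 _).symm, (cv_ne_uv h7 _).symm,
         (cv_ne_uv h7 _).symm, (cv_ne_uv h7 _).symm⟩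

lemma degEq (v : Fin n) :
    (MyG n).degree v = if v.val = n-1 then 3 else if v.val < 3 then 5 else 4 := by
  haveI : NeZero (n-1) := ⟨by omega⟩
  by_cases h1 : v.val = n-1
  · rw [if_pos h1, show v = uv n h7 from Fin.ext h1, deg_uv h7]
  · rw [if_neg h1]
    have hvm : v.val < n-1 := by have := v.isLt; omega
    have hveq : v = cv n h7 ((v.val : ℕ) : ZMod (n-1)) :=
      Fin.ext (by rw [cv_val]; exact (ZMod.val_cast_of_lt hvm).symm)
    have hval : (((v.val : ℕ) : ZMod (n-1))).val = v.val := ZMod.val_cast_of_lt hvm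
    by_cases h2 : v.val < 3
    · rw [if_pos h2, hveq, deg_cv_small h7 _ (by rw [hval]; exact h2)]
    · rw [if_neg h2, hveq, deg_cv_big h7 _ (by rw [hval]; exact h2)]

lemma sumDeg : ∑ v : Fin n, (MyG n).degree v = 4 * n + 2 := by
  have h1 : ∑ v : Fin n, (MyG n).degree v
      = ∑ v : Fin n, (if v.val = n-1 then 3 else if v.val < 3 then 5 else 4) :=
    Finset.sum_congr rfl (fun v _ => degEq h7 v)
  rw [h1, Fin.sum_univ_eq_sum_range (fun i => if i = n-1 then 3 else if i < 3 then 5 else 4)]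
  obtain ⟨m, rfl⟩ : ∃ m, n = m + 1 := ⟨n - 1, by omega⟩
  have hm : m + 1 - 1 = m := by omega
  rw [show m + 1 = m + 1 from rfl, Finset.sum_range_succ]
  have h2 : ∀ i ∈ Finset.range m,
      (if i = m + 1 - 1 then 3 else if i < 3 then 5 else 4) = (if i < 3 then 5 else 4) := by
    intro i hi
    rw [Finset.mem_range] at hi
    rw [if_neg (by omega)]
  rw [Finset.sum_congr rfl h2, if_pos (by omega)]
  have h3 : ∑ i ∈ Finset.range m, (if i < 3 then 5 else 4)
      = ∑ i ∈ Finset.range m, (4 + if i < 3 then 1 else 0) := by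
    apply Finset.sum_congr rfl
    intro i _
    split <;> omega
  rw [h3, Finset.sum_add_distrib, Finset.sum_const, Finset.card_range, Finset.sum_boole]
  have h4 : (Finset.range m).filter (fun i => i < 3) = Finset.range 3 := by
    ext i
    simp only [Finset.mem_filter, Finset.mem_range]
    omega
  rw [Nat.cast_id, h4, Finset.card_range, smul_eq_mul]
  omega

lemma edgeCount : (MyG n).edgeFinset.card = 2 * n + 1 := by
  have h := SimpleGraph.sum_degrees_eq_twice_card_edges (MyG n)
  rw [sumDeg h7] at h
  omega
lemma conn : (MyG n).Connected := by
  have hnot : ¬ (triSet h7 ⊆ (∅ : Finset (Fin n))) := by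
    intro hsub
    have := Finset.card_le_card hsub
    rw [triCard h7] at this
    simp at this
  have h := noCut h7 ∅ (by simp) hnot
  have he : ((↑(∅ : Finset (Fin n)) : Set (Fin n))ᶜ) = Set.univ := by simp
  rw [he] at h
  exact ((induceUnivIso (MyG n)).connected_iff).mp h

end

/-- For every `n ≥ 7` there is a connected graph of order `n` and size
`2n + 1` with no foresty minimum vertex cut. -/
theorem exists_graph_size_no_foresty_minimum_vertex_cut
    (n : ℕ) (h7 : 7 ≤ n) :
    ∃ G : SimpleGraph (Fin n), G.Connected ∧ G.edgeSet.ncard = 2 * n + 1 ∧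
      ¬ ∃ S : Finset (Fin n), IsVertexCut G S ∧ S.card = graphConnectivity G ∧
        (G.induce (S : Set (Fin n))).IsAcyclic := by
  refine ⟨MyG n, conn h7, ?_, ?_⟩
  · have h := edgeCount h7
    rw [Set.ncard_eq_toFinset_card']
    exact h
  · rintro ⟨S, hcut, hcard, hacyc⟩
    rw [kappa h7] at hcard
    rw [cutEq h7 S hcut hcard] at hacyc
    exact triNotAcyclic h7 hacyc
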